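/- Let D be a divisor on a nonsingular projective surface X with D² > 0. Then for any divisor E on X, (D²)(E²) ≤ (D.E)². -/

import Mathlib

/-- Consequence of the Hodge index theorem.  `V` stands for `Num(X) ⊗ ℝ` for a
nonsingular projective surface `X`, and `B` for the intersection pairing, which by the
Hodge index theorem can be diagonalized in some basis with a single `+1` and all other
diagonal entries `−1`.  Then for divisor classes `D, E` with `D² > 0` one has
`(D²)(E²) ≤ (D.E)²`. -/
theorem stmt_3 {V : Type*} [AddCommGroup V] [Module ℝ V]
    (B : LinearMap.BilinForm ℝ V)
    (hsymm : ∀ x y, B x y = B y x)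
    (hodge : ∃ (n : ℕ) (e : Module.Basis (Fin n) ℝ V),
      (∀ i j : Fin n, i ≠ j → B (e i) (e j) = 0) ∧
      (∀ i : Fin n, (i : ℕ) = 0 → B (e i) (e i) = 1) ∧
      (∀ i : Fin n, (i : ℕ) ≠ 0 → B (e i) (e i) = -1))
    (D E : V) (hD : 0 < B D D) :
    B D D * B E E ≤ (B D E) ^ 2 := by
  obtain ⟨n, e, hoff, hdiag1, hdiagm⟩ := hodge
  -- expansion of B in coordinates
  have key : ∀ x y : V, B x y = ∑ i, e.repr x i * e.repr y i * B (e i) (e i) := by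
    intro x y
    have expand : B x y = ∑ j, ∑ i, e.repr x i * e.repr y j * B (e i) (e j) := by
      conv_lhs => rw [← e.sum_repr x, ← e.sum_repr y]
      rw [map_sum]
      refine Finset.sum_congr rfl fun j _ => ?_
      rw [map_smul, smul_eq_mul, map_sum, LinearMap.sum_apply, Finset.mul_sum]
      refine Finset.sum_congr rfl fun i _ => ?_
      rw [map_smul, LinearMap.smul_apply, smul_eq_mul]
      ring
    rw [expand]
    refine Finset.sum_congr rfl fun j _ => ?_
    rw [Finset.sum_eq_single j]
    · intro i _ hij
      rw [hoff i j hij]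
      ring
    · simp
  -- n > 0
  have hn : 0 < n := by
    rcases Nat.eq_zero_or_pos n with h | h
    · exfalso
      have := key D D
      subst h
      simp at this
      rw [this] at hD
      exact lt_irrefl _ hD
    · exact h
  set i0 : Fin n := ⟨0, hn⟩ with hi0
  have hBe0 : B (e i0) (e i0) = 1 := hdiag1 i0 rfl
  have hBem : ∀ i ∈ Finset.univ.erase i0, B (e i) (e i) = -1 := by
    intro i hi
    apply hdiagm
    intro h
    exact (Finset.mem_erase.1 hi).1 (Fin.ext h)
  set s := Finset.univ.erase i0 with hs
  have key2 : ∀ x y : V,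
      B x y = e.repr x i0 * e.repr y i0 - ∑ i ∈ s, e.repr x i * e.repr y i := by
    intro x y
    rw [key x y, ← Finset.add_sum_erase _ _ (Finset.mem_univ i0), hBe0]
    have : ∑ i ∈ s, e.repr x i * e.repr y i * B (e i) (e i)
        = -∑ i ∈ s, e.repr x i * e.repr y i := by
      rw [← Finset.sum_neg_distrib]
      exact Finset.sum_congr rfl fun i hi => by rw [hBem i hi]; ring
    rw [this]
    ring
  set a : Fin n → ℝ := fun i => e.repr D i with ha
  set b : Fin n → ℝ := fun i => e.repr E i with hb
  have hDD : B D D = a i0 * a i0 - ∑ i ∈ s, a i * a i := key2 D D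
  have hEE : B E E = b i0 * b i0 - ∑ i ∈ s, b i * b i := key2 E E
  have hDE : B D E = a i0 * b i0 - ∑ i ∈ s, a i * b i := key2 D E
  have hCS : (∑ i ∈ s, a i * b i) ^ 2 ≤ (∑ i ∈ s, a i * a i) * ∑ i ∈ s, b i * b i := by
    have := Finset.sum_mul_sq_le_sq_mul_sq s a b
    simpa [sq] using this
  have hA : (0:ℝ) ≤ ∑ i ∈ s, a i * a i := Finset.sum_nonneg fun i _ => mul_self_nonneg _
  have hC : (0:ℝ) ≤ ∑ i ∈ s, b i * b i := Finset.sum_nonneg fun i _ => mul_self_nonneg _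
  set d0 := a i0
  set f0 := b i0
  set A := ∑ i ∈ s, a i * a i
  set C := ∑ i ∈ s, b i * b i
  set P := ∑ i ∈ s, a i * b i
  rw [hDD, hEE, hDE]
  rw [hDD] at hD
  rcases hA.eq_or_lt with hA0 | hApos
  · have hP : P = 0 := by
      have : P ^ 2 ≤ 0 := by rw [← hA0] at hCS; linarith [hCS, mul_nonneg hA hC]
      nlinarith [sq_nonneg P]
    rw [hP, ← hA0]
    nlinarith [mul_nonneg (mul_self_nonneg d0) hC]
  · have hmul : 0 ≤ A * ((d0 * f0 - P) ^ 2 - (d0 * d0 - A) * (f0 * f0 - C)) := by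
      have hid : A * ((d0 * f0 - P) ^ 2 - (d0 * d0 - A) * (f0 * f0 - C))
          = (A * f0 - d0 * P) ^ 2 + (d0 * d0 - A) * (A * C - P ^ 2) := by ring
      rw [hid]
      have h1 : (0:ℝ) ≤ (A * f0 - d0 * P) ^ 2 := sq_nonneg _
      have h2 : (0:ℝ) ≤ (d0 * d0 - A) * (A * C - P ^ 2) :=
        mul_nonneg (by linarith) (by linarith)
      linarith
    nlinarith [hmul]
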